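/- Let Δ = (Σ_1, …, Σ_n) be a distribution of Σ and let Δ' = (Σ'_1, …, Σ'_k) ∈ M(Δ). If there exists i ∈ [1, k] such that Σ'_i is not a component of Δ and Cr_{Δ'}(Σ'_i, σ') = [1, n] for every σ' ∈ Σ − Σ'_i (where Cr_{Δ'} is computed with N determined by Δ and with simple paths in the graph (Σ, D_{Δ'})), then L_cand is decomposable with respect to Δ'. -/

import Mathlib

/-- A *distribution* of the (finite) alphabet `α`: a family of non-empty,
pairwise incomparable (under set inclusion) sub-alphabets whose union is `α`.
Its size is `comps.ncard`. -/
structure Distr (α : Type) [Fintype α] where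
  comps : Set (Set α)
  comps_nonempty : ∀ S ∈ comps, S.Nonempty
  comps_cover : ∀ a : α, ∃ S ∈ comps, a ∈ S
  comps_incomp : ∀ S ∈ comps, ∀ T ∈ comps, S ≠ T → ¬ S ⊆ T

section Defs

variable {α : Type} [Fintype α]

/-- Natural projection `P_{Σ'}`: erase from a string all symbols not in `S`. -/
noncomputable def projA (S : Set α) (s : List α) : List α :=
  s.filter fun a => @decide (a ∈ S) (Classical.propDecidable _)

/-- `L` is decomposable with respect to `Δ`:
`L = ∥_i P_{Σ_i}(L) = ⋂_i P_{Σ_i}⁻¹(P_{Σ_i}(L))`. -/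
def Decomposable (L : Set (List α)) (Δ : Distr α) : Prop :=
  L = ⋂ S ∈ Δ.comps, projA S ⁻¹' (projA S '' L)

/-- The partial order `≤_Σ` on distributions: every component of `Δ` is
contained in some component of `Δ'`. -/
def DistLE (Δ Δ' : Distr α) : Prop :=
  ∀ S ∈ Δ.comps, ∃ T ∈ Δ'.comps, S ⊆ T

/-- `P` is a *reduction* of `Δ`. -/
def IsReduction (P : Set (Distr α)) (Δ : Distr α) : Prop :=
  2 ≤ P.ncard ∧
  (∀ Δ' ∈ P, Δ'.comps.ncard < Δ.comps.ncard) ∧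
  (∀ L : Set (List α), Decomposable L Δ ↔ ∀ Δ' ∈ P, Decomposable L Δ')

/-- The maximal members (under set inclusion) of a family of sets. -/
def MaximalMem {β : Type} (F : Set (Set β)) : Set (Set β) :=
  {S | S ∈ F ∧ ∀ T ∈ F, S ⊆ T → S = T}

/-- The dependence relation `D_Δ`. -/
def DepRel (Δ : Distr α) : Set (α × α) :=
  {p | ∃ S ∈ Δ.comps, p.1 ∈ S ∧ p.2 ∈ S}

/-- The independence relation `I_Δ = Σ × Σ − D_Δ`. -/
def IndepRel (Δ : Distr α) : Set (α × α) :=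
  {p | ¬ ∃ S ∈ Δ.comps, p.1 ∈ S ∧ p.2 ∈ S}

/-- `Σ' ⊑ Δ`: `Σ'` is contained in some component of `Δ`. -/
def SqSub (S : Set α) (Δ : Distr α) : Prop :=
  ∃ T ∈ Δ.comps, S ⊆ T

/-- `Δ` is the greatest lower bound of the family `D` with respect to `≤_Σ`. -/
def IsGLBFam {l : ℕ} (D : Fin l → Distr α) (Δ : Distr α) : Prop :=
  (∀ i, DistLE Δ (D i)) ∧
  ∀ Δ''' : Distr α, (∀ i, DistLE Δ''' (D i)) → DistLE Δ''' Δ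

/-- `Δ'` is *merged* from `Δ`: `Δ' ≠ (Σ)` and `Δ'` is obtained from a
partition of the components of `Δ` having at least one block of size ≥ 2 by
taking the unions over the blocks and keeping only the maximal resulting
sub-alphabets. -/
def MergedFrom (Δ' Δ : Distr α) : Prop :=
  Δ'.comps ≠ {Set.univ} ∧
  ∃ part : Set (Set (Set α)),
    (∀ B ∈ part, B.Nonempty) ∧
    (∀ B ∈ part, B ⊆ Δ.comps) ∧
    (∀ B ∈ part, ∀ C ∈ part, B ≠ C → Disjoint B C) ∧
    (∀ S ∈ Δ.comps, ∃ B ∈ part, S ∈ B) ∧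
    (∃ B ∈ part, ∃ S ∈ B, ∃ T ∈ B, S ≠ T) ∧
    Δ'.comps = MaximalMem {U : Set α | ∃ B ∈ part, U = ⋃₀ B}

/-- Membership in the search space `S_Δ`: a set of distributions merged from
`Δ` that are pairwise `≤_Σ`-incomparable. -/
def MemS (Δ : Distr α) (P : Set (Distr α)) : Prop :=
  (∀ Δ' ∈ P, MergedFrom Δ' Δ) ∧
  ∀ Δ₁ ∈ P, ∀ Δ₂ ∈ P, Δ₁ ≠ Δ₂ → ¬ DistLE Δ₁ Δ₂

/-- The ordering `≤_Δ` on sets of distributions: every member of `Q` has a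
member of `P` below it with respect to `≤_Σ`. -/
def SetLE (P Q : Set (Distr α)) : Prop :=
  ∀ Δ' ∈ Q, ∃ Δ'' ∈ P, DistLE Δ'' Δ'

/-- `[F]`: the `≤_Σ`-minimal members of a set of distributions. -/
def MinimalD (F : Set (Distr α)) : Set (Distr α) :=
  {Δ' | Δ' ∈ F ∧ ∀ Δ'' ∈ F, DistLE Δ'' Δ' → DistLE Δ' Δ''}

/-- `Δ'` is obtained from `Δ` by merging exactly two components `S ≠ T`
(and keeping only the maximal sub-alphabets); the members of `⊥(Δ)`. -/
def MinMergedFrom (Δ' Δ : Distr α) : Prop :=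
  ∃ S ∈ Δ.comps, ∃ T ∈ Δ.comps, S ≠ T ∧
    Δ'.comps = MaximalMem ((Δ.comps \ {S, T}) ∪ {S ∪ T})

/-- The set `A(Δ)` of shared symbols of a distribution. -/
def SharedSyms (Δ : Distr α) : Set α :=
  {a | ∃ S ∈ Δ.comps, ∃ T ∈ Δ.comps, S ≠ T ∧ a ∈ S ∧ a ∈ T}

/-- The substitution of `Δ'` into the component `C` of `Δ''` yields `Δs`:
`Δs` is obtained from the components of `Δ''` other than `C` together with the
intersections `C ∩ S` for components `S` of `Δ'`, keeping only the maximal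
non-empty members. -/
def SubstResult (Δ' Δ'' : Distr α) (C : Set α) (Δs : Distr α) : Prop :=
  Δs.comps =
    MaximalMem {T : Set α |
      T.Nonempty ∧ (T ∈ Δ''.comps \ {C} ∨ ∃ S ∈ Δ'.comps, T = C ∩ S)}

/-- One swap of two adjacent symbols forming a pair in `I`. -/
def SwapStep (I : Set (α × α)) (s t : List α) : Prop :=
  ∃ (u v : List α) (a b : α),
    (a, b) ∈ I ∧ s = u ++ a :: b :: v ∧ t = u ++ b :: a :: v

/-- Trace equivalence with respect to `I`: a finite sequence of swaps of
adjacent independent symbols. -/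
def TraceEquiv (I : Set (α × α)) : List α → List α → Prop :=
  Relation.ReflTransGen (SwapStep I)

/-- `L` is trace-closed with respect to `I`. -/
def TraceClosed (I : Set (α × α)) (L : Set (List α)) : Prop :=
  L = {t | ∃ s ∈ L, TraceEquiv I s t}

/-- The map `N` determined by the enumeration `c` of the components of a
distribution: `N(a) = {i : a ∉ Σ_i}`. -/
def Nmap {n : ℕ} (c : Fin n → Set α) (a : α) : Set (Fin n) :=
  {i | a ∉ c i}

/-- A simple path from `x` to `y` in the graph `(Σ, D)`: a list of pairwise
distinct symbols, starting at `x`, ending at `y`, with consecutive symbols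
related by `D`. -/
def IsSimplePath (D : Set (α × α)) (p : List α) (x y : α) : Prop :=
  p.Nodup ∧ p.head? = some x ∧ p.getLast? = some y ∧
    p.Chain' (fun a b => (a, b) ∈ D)

/-- `Cr_D(S, y)` (with `N` given by the enumeration `c`): the set of indices
`i` such that some simple path `p` from some `x ∈ S` to `y` in `(Σ, D)`
satisfies `i ∈ ⋂_{a ∈ p.dropLast} N(a)`. -/
def CrSet {n : ℕ} (c : Fin n → Set α) (D : Set (α × α)) (S : Set α) (y : α) :
    Set (Fin n) :=
  {i | ∃ x ∈ S, ∃ p : List α,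
    IsSimplePath D p x y ∧ ∀ a ∈ p.dropLast, i ∈ Nmap c a}

/-- The smallest set of distributions containing `Q` and closed under
substitution. -/
inductive SubstClosure (Q : Set (Distr α)) : Distr α → Prop
  | base (Δ' : Distr α) (h : Δ' ∈ Q) : SubstClosure Q Δ'
  | step (Δ' Δ'' Δs : Distr α) (C : Set α)
      (h1 : SubstClosure Q Δ') (h2 : SubstClosure Q Δ'')
      (hC : C ∈ Δ''.comps) (hA : SharedSyms Δ' ⊆ C)
      (hs : SubstResult Δ' Δ'' C Δs) : SubstClosure Q Δs

end Defs

section Count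

variable {α : Type} [Fintype α] [DecidableEq α]

/-- `L(Σ_j)` (with `j` 0-indexed, so the paper's exponent `j+1` is `j+2`
here): all strings containing exactly one occurrence of each `σ_i ∈ Σ_j` and
exactly `j+2` occurrences of each `σ_i ∉ Σ_j`. -/
def Lword {m : ℕ} (σ : Fin m → α) (Sj : Set α) (j : ℕ) : Set (List α) :=
  {s | ∀ i : Fin m,
    (σ i ∈ Sj → s.count (σ i) = 1) ∧ (σ i ∉ Sj → s.count (σ i) = j + 2)}

/-- The candidate counter example `L_cand = ⋃_j L(Σ_j)`, relative to an
enumeration `c` of the components and an enumeration `σ` of the alphabet. -/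
def Lcand {n m : ℕ} (c : Fin n → Set α) (σ : Fin m → α) : Set (List α) :=
  ⋃ j : Fin n, Lword σ (c j) (j : ℕ)

end Count


open scoped Classical in
private lemma path_prop_aux {α : Type} {n : ℕ} (c : Fin n → Set α) (f : α → ℕ)
    (D : Set (α × α)) (comps : Set (Set α))
    (hD : ∀ p ∈ D, ∃ T ∈ comps, p.1 ∈ T ∧ p.2 ∈ T)
    (H : ∀ T ∈ comps, ∃ j : Fin n, ∀ a ∈ T,
        f a = if a ∈ c j then 1 else (j : ℕ) + 2)
    (j : Fin n) :
    ∀ (q : List α) (x y : α), q ≠ [] → (x :: q).getLast? = some y →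
      List.Chain' (fun a b => (a, b) ∈ D) (x :: q) →
      (∀ b ∈ (x :: q).dropLast, b ∉ c j) → f x = (j : ℕ) + 2 →
      f y = if y ∈ c j then 1 else (j : ℕ) + 2 := by
  intro q
  induction q with
  | nil => intro x y hne; exact absurd rfl hne
  | cons b rest ih =>
    intro x y _ hlast hchain hdrop hfx
    replace hchain := List.isChain_cons_cons.mp hchain
    obtain ⟨hxb, hchain⟩ := hchain
    obtain ⟨T, hT, hxT, hbT⟩ := hD _ hxb
    obtain ⟨jT, hjT⟩ := H T hT
    have hfx' := hjT x hxT
    have hxj : x ∉ c jT ∧ jT = j := by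
      by_cases hx : x ∈ c jT
      · rw [if_pos hx] at hfx'; omega
      · refine ⟨hx, ?_⟩
        rw [if_neg hx] at hfx'
        have : (jT : ℕ) = (j : ℕ) := by omega
        exact Fin.ext this
    have hfb : f b = if b ∈ c j then 1 else (j : ℕ) + 2 := by
      rw [← hxj.2]; exact hjT b hbT
    cases rest with
    | nil =>
      have : b = y := by simpa using hlast
      exact this ▸ hfb
    | cons d rest' =>
      have hlast' : (b :: d :: rest').getLast? = some y := by
        rwa [List.getLast?_cons_cons] at hlast
      have hbdrop : b ∈ (x :: b :: d :: rest').dropLast := by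
        rw [List.dropLast_cons₂, List.dropLast_cons₂]
        simp
      have hfb2 : f b = (j : ℕ) + 2 := by
        rw [hfb, if_neg (hdrop b hbdrop)]
      refine ih b y (by simp) hlast' hchain ?_ hfb2
      intro b' hb'
      refine hdrop b' ?_
      rw [List.dropLast_cons₂]
      exact List.mem_cons_of_mem _ hb'

/-- If `Δ' ∈ M(Δ)` has a component `S` that is not a
component of `Δ` with `Cr_{Δ'}(S, σ') = [1, n]` for every `σ' ∈ Σ − S`
(with `N` determined by `Δ` and simple paths in `(Σ, D_{Δ'})`), then
`L_cand` is decomposable with respect to `Δ'`. -/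
theorem statement_6 {α : Type} [Fintype α] [DecidableEq α] (Δ Δ' : Distr α)
    (hM : MergedFrom Δ' Δ)
    (n m : ℕ) (c : Fin n → Set α)
    (hc1 : Function.Injective c) (hc2 : Set.range c = Δ.comps)
    (σ : Fin m → α) (hσ : Function.Bijective σ)
    (h : ∃ S ∈ Δ'.comps, S ∉ Δ.comps ∧
      ∀ y : α, y ∉ S → CrSet c (DepRel Δ') S y = Set.univ) :
    Decomposable (Lcand c σ) Δ' := by
  classical
  obtain ⟨S, hS, hSnot, hCr⟩ := h
  unfold Decomposable
  apply Set.Subset.antisymm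
  · intro s hs
    simp only [Set.mem_iInter]
    intro T hT
    exact ⟨s, hs, rfl⟩
  · intro s hs
    simp only [Set.mem_iInter] at hs
    have H : ∀ T ∈ Δ'.comps, ∃ j : Fin n, ∀ a ∈ T,
        s.count a = if a ∈ c j then 1 else (j : ℕ) + 2 := by
      intro T hT
      obtain ⟨s', hs', hproj⟩ := hs T hT
      obtain ⟨j, hj⟩ : ∃ j : Fin n, s' ∈ Lword σ (c j) (j : ℕ) := by
        simpa only [Lcand, Set.mem_iUnion] using hs'
      refine ⟨j, fun a ha => ?_⟩
      obtain ⟨i, rfl⟩ := hσ.2 a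
      have h1 : (projA T s).count (σ i) = s.count (σ i) :=
        List.count_filter (by simpa using ha)
      have h2 : (projA T s').count (σ i) = s'.count (σ i) :=
        List.count_filter (by simpa using ha)
      have hcount : s.count (σ i) = s'.count (σ i) := by
        rw [← h1, ← hproj, h2]
      rw [hcount]
      obtain ⟨hj1, hj2⟩ := hj i
      by_cases hmem : σ i ∈ c j
      · rw [if_pos hmem]; exact hj1 hmem
      · rw [if_neg hmem]; exact hj2 hmem
    obtain ⟨jS, hjS⟩ := H S hS
    refine Set.mem_iUnion.2 ⟨jS, fun i => ?_⟩
    suffices hgoal : s.count (σ i) = if σ i ∈ c jS then 1 else (jS : ℕ) + 2 by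
      constructor
      · intro hm; rw [hgoal, if_pos hm]
      · intro hm; rw [hgoal, if_neg hm]
    by_cases hin : σ i ∈ S
    · exact hjS _ hin
    · have hjmem : jS ∈ CrSet c (DepRel Δ') S (σ i) :=
        (hCr (σ i) hin) ▸ Set.mem_univ jS
      obtain ⟨x, hxS, p, ⟨hnodup, hhead, hlast, hchain⟩, hdrop⟩ := hjmem
      cases p with
      | nil => simp at hhead
      | cons a q =>
        have hax : a = x := by simpa using hhead
        subst hax
        cases q with
        | nil =>
          have hya : a = σ i := by simpa using hlast
          exact absurd (hya ▸ hxS) hin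
        | cons b rest =>
          have hxdrop : a ∈ (a :: b :: rest).dropLast := by
            rw [List.dropLast_cons₂]; simp
          have hfx : s.count a = (jS : ℕ) + 2 := by
            rw [hjS a hxS, if_neg (hdrop a hxdrop)]
          exact path_prop_aux c (fun a => s.count a) (DepRel Δ') Δ'.comps
            (fun p hp => hp) H jS (b :: rest) a (σ i) (by simp) hlast hchain
            (fun b' hb' => hdrop b' hb') hfx
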